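/- Let A and B be monotone operators (on H and G respectively) with single-valued resolvents, K : H → G bounded linear, τ, σ > 0, γ = τσ, and let P be a bounded self-adjoint positive definite invertible operator on H×G with 0 ≺ P ≺ Φ_K, where Φ_K is the block operator Φ_K(v,u) = (2v + γK*u, γKv + 2γu). Define T as: given z = (v,u), x = J_{τA}(v − τK*(σKv − u/τ)), w = J_{B/σ}(Kv + Kx − u/γ), T(z) = z + P(x − v, w − Kx). Then with M := P⁻¹ and Q := M*(Φ_K − P)M ≻ 0, for all z, z̄ ∈ H×G: ‖T(z) − T(z̄)‖_M² ≤ ‖z − z̄‖_M² − ‖(I−T)(z) − (I−T)(z̄)‖_Q². -/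

import Mathlib

open scoped InnerProductSpace
open ContinuousLinearMap

set_option maxHeartbeats 1000000 in
/-- The primal-dual operator `T(z) = z + P(x − v, w − Kx)` (with
`x = J_{τA}(v − τK*(σKv − u/τ))`, `w = J_{B/σ}(Kv + Kx − u/γ)`, `z = (v,u)`) built from
monotone operators `A`, `B` and a self-adjoint positive definite invertible `P` with
`0 ≺ P ≺ Φ_K` satisfies, with `M = P⁻¹` and `Q = M*(Φ_K − P)M ≻ 0`,
`‖T(z) − T(z̄)‖_M² ≤ ‖z − z̄‖_M² − ‖(I−T)z − (I−T)z̄‖_Q²` for all `z, z̄`.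
Here the product Hilbert space is `WithLp 2 (H × G)` and
`⟪d, Q d⟫ = ⟪M d, (Φ_K − P)(M d)⟫` since `M` is self-adjoint. -/
theorem stmt8 {H G : Type*} [NormedAddCommGroup H] [InnerProductSpace ℝ H] [CompleteSpace H]
    [NormedAddCommGroup G] [InnerProductSpace ℝ G] [CompleteSpace G]
    (A : H → Set H) (B : G → Set G)
    (hA_mono : ∀ x y u v : H, u ∈ A x → v ∈ A y → 0 ≤ ⟪x - y, u - v⟫_ℝ)
    (hB_mono : ∀ x y u v : G, u ∈ B x → v ∈ B y → 0 ≤ ⟪x - y, u - v⟫_ℝ)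
    (K : H →L[ℝ] G)
    (τ σ γ : ℝ) (hτ : 0 < τ) (hσ : 0 < σ) (hγ : γ = τ * σ)
    (JA : H → H) (JB : G → G)
    (hJA : ∀ s : H, τ⁻¹ • (s - JA s) ∈ A (JA s))
    (hJB : ∀ s : G, σ • (s - JB s) ∈ B (JB s))
    (P Minv : WithLp 2 (H × G) →L[ℝ] WithLp 2 (H × G))
    (hP_selfadj : ∀ z z' : WithLp 2 (H × G), ⟪P z, z'⟫_ℝ = ⟪z, P z'⟫_ℝ)
    (hP_posdef : ∃ c > (0:ℝ), ∀ z : WithLp 2 (H × G), c * ‖z‖ ^ 2 ≤ ⟪z, P z⟫_ℝ)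
    (hMinv : ∀ z, Minv (P z) = z) (hMinv' : ∀ z, P (Minv z) = z)
    (Phi : WithLp 2 (H × G) → WithLp 2 (H × G))
    (hPhi : ∀ z : WithLp 2 (H × G), Phi z = (WithLp.equiv 2 (H × G)).symm
        ((2:ℝ) • (WithLp.equiv 2 (H × G) z).1 + γ • (adjoint K) (WithLp.equiv 2 (H × G) z).2,
         γ • K (WithLp.equiv 2 (H × G) z).1 + (2 * γ) • (WithLp.equiv 2 (H × G) z).2))
    -- `P ≺ Φ_K`:
    (hPhiP_posdef : ∃ c > (0:ℝ), ∀ z : WithLp 2 (H × G), c * ‖z‖ ^ 2 ≤ ⟪z, Phi z - P z⟫_ℝ)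
    (xf : WithLp 2 (H × G) → H) (wf : WithLp 2 (H × G) → G)
    (T : WithLp 2 (H × G) → WithLp 2 (H × G))
    (hxf : ∀ z : WithLp 2 (H × G), xf z = JA ((WithLp.equiv 2 (H × G) z).1 -
        τ • (adjoint K) (σ • K (WithLp.equiv 2 (H × G) z).1 -
          τ⁻¹ • (WithLp.equiv 2 (H × G) z).2)))
    (hwf : ∀ z : WithLp 2 (H × G), wf z = JB (K (WithLp.equiv 2 (H × G) z).1 + K (xf z) -
        γ⁻¹ • (WithLp.equiv 2 (H × G) z).2))
    (hT : ∀ z : WithLp 2 (H × G), T z = z + P ((WithLp.equiv 2 (H × G)).symm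
        (xf z - (WithLp.equiv 2 (H × G) z).1, wf z - K (xf z)))) :
    -- `Q := M*(Φ_K − P)M ≻ 0` and the extended firm nonexpansiveness inequality holds:
    (∃ c > (0:ℝ), ∀ z : WithLp 2 (H × G),
        c * ‖z‖ ^ 2 ≤ ⟪Minv z, Phi (Minv z) - P (Minv z)⟫_ℝ) ∧
      ∀ z zbar : WithLp 2 (H × G),
        ⟪T z - T zbar, Minv (T z - T zbar)⟫_ℝ ≤
          ⟪z - zbar, Minv (z - zbar)⟫_ℝ -
            ⟪Minv ((z - T z) - (zbar - T zbar)),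
              Phi (Minv ((z - T z) - (zbar - T zbar))) -
                P (Minv ((z - T z) - (zbar - T zbar)))⟫_ℝ := by
  have hγ0 : 0 < γ := hγ ▸ mul_pos hτ hσ
  obtain ⟨c, hc, hcle⟩ := hPhiP_posdef
  -- inner product formula for `Phi`
  have hip : ∀ d : WithLp 2 (H × G), ⟪d, Phi d⟫_ℝ =
      2*⟪d.fst, d.fst⟫_ℝ + γ*⟪K d.fst, d.snd⟫_ℝ + γ*⟪d.snd, K d.fst⟫_ℝ
        + 2*γ*⟪d.snd, d.snd⟫_ℝ := by
    intro d
    rw [hPhi, WithLp.prod_inner_apply]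
    simp only [WithLp.equiv_apply, WithLp.ofLp_fst, WithLp.ofLp_snd, WithLp.equiv_symm_apply,
        WithLp.toLp_fst, WithLp.toLp_snd,
      inner_add_right, real_inner_smul_right, ContinuousLinearMap.adjoint_inner_right]
    ring
  constructor
  · refine ⟨c / (‖P‖ ^ 2 + 1), by positivity, fun z => ?_⟩
    have h1 : ‖z‖ ≤ ‖P‖ * ‖Minv z‖ := by
      conv_lhs => rw [← hMinv' z]
      exact P.le_opNorm _
    have h2 := hcle (Minv z)
    have h3 : ‖z‖^2 ≤ ‖P‖^2 * ‖Minv z‖^2 := by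
      nlinarith [norm_nonneg z, norm_nonneg (Minv z), norm_nonneg P]
    have h4 : c / (‖P‖^2+1) * ‖z‖^2 ≤ c * ‖Minv z‖^2 := by
      rw [div_mul_eq_mul_div, div_le_iff₀ (by positivity)]
      nlinarith [mul_le_mul_of_nonneg_left h3 hc.le, mul_nonneg hc.le (sq_nonneg (‖Minv z‖))]
    linarith
  · intro z zbar
    set x := xf z with hx
    set x' := xf zbar with hx'
    set w := wf z with hw
    set w' := wf zbar with hw'
    set s := z.fst - τ • (adjoint K) (σ • K z.fst - τ⁻¹ • z.snd) with hs
    set s' := zbar.fst - τ • (adjoint K) (σ • K zbar.fst - τ⁻¹ • zbar.snd) with hs'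
    set t := K z.fst + K x - γ⁻¹ • z.snd with ht
    set t' := K zbar.fst + K x' - γ⁻¹ • zbar.snd with ht'
    have hxs : x = JA s := by
      rw [hx, hxf, hs]
      simp only [WithLp.equiv_apply, WithLp.ofLp_fst, WithLp.ofLp_snd]
    have hxs' : x' = JA s' := by
      rw [hx', hxf, hs']
      simp only [WithLp.equiv_apply, WithLp.ofLp_fst, WithLp.ofLp_snd]
    have hws : w = JB t := by
      rw [hw, hwf, ht, ← hx]
      simp only [WithLp.equiv_apply, WithLp.ofLp_fst, WithLp.ofLp_snd]
    have hws' : w' = JB t' := by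
      rw [hw', hwf, ht', ← hx']
      simp only [WithLp.equiv_apply, WithLp.ofLp_fst, WithLp.ofLp_snd]
    have hmemA : τ⁻¹ • (s - x) ∈ A x := by rw [hxs]; exact hJA s
    have hmemA' : τ⁻¹ • (s' - x') ∈ A x' := by rw [hxs']; exact hJA s'
    have hmemB : σ • (t - w) ∈ B w := by rw [hws]; exact hJB t
    have hmemB' : σ • (t' - w') ∈ B w' := by rw [hws']; exact hJB t'
    have hI0 := hA_mono x x' _ _ hmemA hmemA'
    have hII0 := hB_mono w w' _ _ hmemB hmemB'
    rw [← smul_sub, real_inner_smul_right] at hI0 hII0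
    have hI1 : (0:ℝ) ≤ ⟪x - x', (s - x) - (s' - x')⟫_ℝ := by
      nlinarith [hI0, inv_pos.mpr hτ]
    have hII1 : (0:ℝ) ≤ ⟪w - w', (t - w) - (t' - w')⟫_ℝ := by
      nlinarith [hII0, hσ]
    have key : ∀ ζ : WithLp 2 (H × G),
        ζ.fst - τ • (adjoint K) (σ • K ζ.fst - τ⁻¹ • ζ.snd)
          = ζ.fst - γ • (adjoint K) (K ζ.fst) + (adjoint K) ζ.snd := by
      intro ζ
      simp only [map_sub, map_smul, smul_sub, smul_smul]
      rw [← hγ, mul_inv_cancel₀ hτ.ne', one_smul]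
      abel
    have hsx : (s - x) - (s' - x') =
        ((z.fst - zbar.fst) - (x - x')) - γ • (adjoint K) (K (z.fst - zbar.fst))
          + (adjoint K) (z.snd - zbar.snd) := by
      rw [hs, hs', key z, key zbar]
      simp only [map_sub, smul_sub]
      abel
    have htw : (t - w) - (t' - w') =
        (K (z.fst - zbar.fst) + K (x - x') - (w - w')) - γ⁻¹ • (z.snd - zbar.snd) := by
      rw [ht, ht']
      simp only [map_sub, smul_sub]
      abel
    rw [hsx] at hI1
    rw [htw] at hII1
    set e := (WithLp.equiv 2 (H × G)).symm (x - z.fst, w - K x) with he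
    set e' := (WithLp.equiv 2 (H × G)).symm (x' - zbar.fst, w' - K x') with he'
    have hTz : T z = z + P e := by
      rw [hT, ← hx, ← hw, he]
      simp only [WithLp.equiv_apply, WithLp.ofLp_fst, WithLp.ofLp_snd]
    have hTz' : T zbar = zbar + P e' := by
      rw [hT, ← hx', ← hw', he']
      simp only [WithLp.equiv_apply, WithLp.ofLp_fst, WithLp.ofLp_snd]
    set δ := e - e' with hδ
    have hTd : T z - T zbar = (z - zbar) + P δ := by
      rw [hTz, hTz', hδ, map_sub]; abel
    have hMd' : (z - T z) - (zbar - T zbar) = -(P δ) := by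
      rw [hTz, hTz', hδ, map_sub]; abel
    have hMd : Minv ((z - T z) - (zbar - T zbar)) = -δ := by
      rw [hMd', map_neg, hMinv]
    have hδ1 : δ.fst = (x - x') - (z.fst - zbar.fst) := by
      rw [hδ, he, he']
      simp only [WithLp.sub_fst, WithLp.equiv_symm_apply, WithLp.toLp_fst]
      abel
    have hδ2 : δ.snd = (w - w') - K (x - x') := by
      rw [hδ, he, he']
      simp only [WithLp.sub_snd, WithLp.equiv_symm_apply, WithLp.toLp_snd, map_sub]
      abel
    have A1 : ⟪T z - T zbar, Minv (T z - T zbar)⟫_ℝ =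
        ⟪z - zbar, Minv (z - zbar)⟫_ℝ + 2*⟪z - zbar, δ⟫_ℝ + ⟪δ, P δ⟫_ℝ := by
      rw [hTd, map_add, hMinv, inner_add_left, inner_add_right, inner_add_right,
        hP_selfadj δ (Minv (z - zbar)), hMinv', hP_selfadj δ δ, real_inner_comm δ (z - zbar)]
      ring
    have hipneg : ⟪-δ, Phi (-δ)⟫_ℝ = ⟪δ, Phi δ⟫_ℝ := by
      rw [hip, hip]
      simp only [WithLp.neg_fst, WithLp.neg_snd, map_neg, inner_neg_neg]
    have A2 : ⟪Minv ((z - T z) - (zbar - T zbar)),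
        Phi (Minv ((z - T z) - (zbar - T zbar))) -
          P (Minv ((z - T z) - (zbar - T zbar)))⟫_ℝ = ⟪δ, Phi δ⟫_ℝ - ⟪δ, P δ⟫_ℝ := by
      rw [hMd, inner_sub_right, hipneg, map_neg, inner_neg_neg]
    have A3 : 2*⟪z - zbar, δ⟫_ℝ + ⟪δ, Phi δ⟫_ℝ ≤ 0 := by
      rw [WithLp.prod_inner_apply, hip]
      simp only [WithLp.ofLp_fst, WithLp.ofLp_snd]
      rw [hδ1, hδ2]
      simp only [WithLp.sub_fst, WithLp.sub_snd]
      rw [map_sub K (x - x') (z.fst - zbar.fst)]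
      set a := x - x' with ha
      set b := z.fst - zbar.fst with hb
      set cc := z.snd - zbar.snd with hcc
      set d := w - w' with hd2
      simp only [inner_add_right, inner_sub_right, inner_sub_left, real_inner_smul_right,
        ContinuousLinearMap.adjoint_inner_right] at hI1 hII1 ⊢
      have hII2 : ⟪d, cc⟫_ℝ ≤ γ * (⟪d, K b⟫_ℝ + ⟪d, K a⟫_ℝ - ⟪d, d⟫_ℝ) := by
        have h3 : γ⁻¹ * ⟪d, cc⟫_ℝ ≤ ⟪d, K b⟫_ℝ + ⟪d, K a⟫_ℝ - ⟪d, d⟫_ℝ := by linarith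
        have h4 := mul_le_mul_of_nonneg_left h3 hγ0.le
        rw [← mul_assoc, mul_inv_cancel₀ hγ0.ne', one_mul] at h4
        exact h4
      have e1 : γ * ⟪K a, d⟫_ℝ = γ * ⟪d, K a⟫_ℝ := by rw [real_inner_comm]
      have e2 : γ * ⟪K b, d⟫_ℝ = γ * ⟪d, K b⟫_ℝ := by rw [real_inner_comm]
      have e3 : γ * ⟪K b, K a⟫_ℝ = γ * ⟪K a, K b⟫_ℝ := by rw [real_inner_comm]
      linarith [hI1, hII2, e1, e2, e3, real_inner_comm a b, real_inner_comm cc d,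
        real_inner_comm cc (K a)]
    rw [A1, A2]
    linarith [A3]
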